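/- Let Ω be a probability space with probability measure μ, let N, c, q, χ be natural numbers with 1 ≤ c ≤ N and q ≥ 2. Let X be a random variable on Ω uniformly distributed over the c-element subsets of Fin N (i.e., over {S : Finset (Fin N) // S.card = c}), let Y be a random variable with values in a finite type, and let Z be a random variable with values in a finite type of cardinality at most q^χ. If X is independent of Y and H[X | ⟨Z, Y⟩; μ] = 0 (i.e., X is determined by (Z, Y)), then (χ : ℝ) ≥ Real.logb q (Nat.choose N c), i.e., χ · log q ≥ log (N choose c). -/
import Mathlib

open MeasureTheory ProbabilityTheory

/-- Shannon entropy (in nats) of a random variable `X` taking values in a finite type,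
under the measure `μ`: `H[X; μ] = ∑ x, -p(x) log p(x)`. -/
noncomputable def shannonEntropy {Ω S : Type*} [MeasurableSpace Ω] [Fintype S]
    (X : Ω → S) (μ : Measure Ω) : ℝ :=
  ∑ x : S, Real.negMulLog (μ (X ⁻¹' {x})).toReal

/-- Conditional Shannon entropy `H[X | Y; μ] = H[⟨X, Y⟩; μ] - H[Y; μ]` of finite-valued
random variables. -/
noncomputable def condShannonEntropy {Ω S T : Type*} [MeasurableSpace Ω] [Fintype S]
    [Fintype T] (X : Ω → S) (Y : Ω → T) (μ : Measure Ω) : ℝ :=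
  shannonEntropy (fun ω => (X ω, Y ω)) μ - shannonEntropy Y μ

section Aux

open Real Finset

/-- Per-term Gibbs inequality. -/
lemma gibbs_term {p q : ℝ} (hp : 0 ≤ p) (hq : 0 ≤ q) (h : q = 0 → p = 0) :
    p * Real.log q - p * Real.log p ≤ q - p := by
  rcases hp.lt_or_eq with hp' | hp'
  · have hq' : 0 < q := by
      rcases hq.lt_or_eq with h' | h'
      · exact h'
      · exact absurd (h h'.symm) hp'.ne'
    have h1 : Real.log (q / p) ≤ q / p - 1 :=
      Real.log_le_sub_one_of_pos (div_pos hq' hp')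
    have h2 : Real.log q - Real.log p = Real.log (q / p) :=
      (Real.log_div hq'.ne' hp'.ne').symm
    have h3 : p * Real.log (q / p) ≤ p * (q / p - 1) :=
      mul_le_mul_of_nonneg_left h1 hp
    have h4 : p * (q / p - 1) = q - p := by field_simp
    calc p * Real.log q - p * Real.log p = p * Real.log (q / p) := by rw [← h2]; ring
      _ ≤ p * (q / p - 1) := h3
      _ = q - p := h4
  · simpa [← hp'] using hq

/-- Gibbs inequality for finite sums. -/
lemma gibbs_sum {ι : Type*} (s : Finset ι) (p q : ι → ℝ)
    (hp : ∀ i ∈ s, 0 ≤ p i) (hq : ∀ i ∈ s, 0 ≤ q i)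
    (h0 : ∀ i ∈ s, q i = 0 → p i = 0) (hsum : ∑ i ∈ s, q i ≤ ∑ i ∈ s, p i) :
    ∑ i ∈ s, Real.negMulLog (p i) ≤ ∑ i ∈ s, -(p i * Real.log (q i)) := by
  have h : ∑ i ∈ s, (p i * Real.log (q i) - p i * Real.log (p i))
      ≤ ∑ i ∈ s, (q i - p i) :=
    Finset.sum_le_sum fun i hi => gibbs_term (hp i hi) (hq i hi) (h0 i hi)
  rw [Finset.sum_sub_distrib, Finset.sum_sub_distrib] at h
  simp only [Real.negMulLog_eq_neg, Finset.sum_neg_distrib]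
  linarith

/-- Superadditivity of `negMulLog` on nonnegative reals. -/
lemma negMulLog_sum_le {ι : Type*} (s : Finset ι) (f : ι → ℝ) (hf : ∀ i ∈ s, 0 ≤ f i) :
    Real.negMulLog (∑ i ∈ s, f i) ≤ ∑ i ∈ s, Real.negMulLog (f i) := by
  have hstep : ∀ i ∈ s, -(f i * Real.log (∑ j ∈ s, f j)) ≤ Real.negMulLog (f i) := by
    intro i hi
    rcases (hf i hi).lt_or_eq with h | h
    · have hle : f i ≤ ∑ j ∈ s, f j := Finset.single_le_sum hf hi
      have hlog : Real.log (f i) ≤ Real.log (∑ j ∈ s, f j) := Real.log_le_log h hle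
      rw [Real.negMulLog]
      nlinarith
    · simp [← h]
  calc Real.negMulLog (∑ i ∈ s, f i)
      = ∑ i ∈ s, -(f i * Real.log (∑ j ∈ s, f j)) := by
        simp only [Real.negMulLog_def, neg_mul]
        rw [Finset.sum_neg_distrib, ← Finset.sum_mul]
    _ ≤ ∑ i ∈ s, Real.negMulLog (f i) := Finset.sum_le_sum hstep

variable {Ω : Type*} [MeasurableSpace Ω] (μ : Measure Ω) [IsProbabilityMeasure μ]

lemma sum_toReal_preimage_eq_one {S : Type*} [Fintype S]
    [MeasurableSpace S] [MeasurableSingletonClass S]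
    {V : Ω → S} (hV : Measurable V) :
    ∑ x : S, (μ (V ⁻¹' {x})).toReal = 1 := by
  rw [← ENNReal.toReal_sum (fun a _ => measure_ne_top μ _),
    sum_measure_preimage_singleton _ (fun x _ => hV (measurableSet_singleton x))]
  simp

lemma marginal_fst {S T : Type*} [Fintype T]
    [MeasurableSpace S] [MeasurableSingletonClass S]
    [MeasurableSpace T] [MeasurableSingletonClass T]
    {Z : Ω → S} {Y : Ω → T} (hZ : Measurable Z) (hY : Measurable Y) (z : S) :
    (μ (Z ⁻¹' {z})).toReal = ∑ y : T, (μ ((fun ω => (Z ω, Y ω)) ⁻¹' {(z, y)})).toReal := by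
  have h1 : ∑ p ∈ ({z} ×ˢ (Finset.univ : Finset T)),
      μ ((fun ω => (Z ω, Y ω)) ⁻¹' {p})
      = μ ((fun ω => (Z ω, Y ω)) ⁻¹' ↑({z} ×ˢ (Finset.univ : Finset T))) :=
    sum_measure_preimage_singleton _
      (fun p _ => (hZ.prodMk hY) (measurableSet_singleton p))
  rw [Finset.sum_product, Finset.sum_singleton] at h1
  have h2 : ((fun ω => (Z ω, Y ω)) ⁻¹' ↑({z} ×ˢ (Finset.univ : Finset T)))
      = Z ⁻¹' {z} := by
    ext ω; simp [eq_comm]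
  rw [h2] at h1
  rw [← h1, ENNReal.toReal_sum (fun _ _ => measure_ne_top μ _)]

lemma marginal_snd {S T : Type*} [Fintype S]
    [MeasurableSpace S] [MeasurableSingletonClass S]
    [MeasurableSpace T] [MeasurableSingletonClass T]
    {Z : Ω → S} {Y : Ω → T} (hZ : Measurable Z) (hY : Measurable Y) (y : T) :
    (μ (Y ⁻¹' {y})).toReal = ∑ z : S, (μ ((fun ω => (Z ω, Y ω)) ⁻¹' {(z, y)})).toReal := by
  have h1 : ∑ p ∈ ((Finset.univ : Finset S) ×ˢ {y}),
      μ ((fun ω => (Z ω, Y ω)) ⁻¹' {p})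
      = μ ((fun ω => (Z ω, Y ω)) ⁻¹' ↑((Finset.univ : Finset S) ×ˢ {y})) :=
    sum_measure_preimage_singleton _
      (fun p _ => (hZ.prodMk hY) (measurableSet_singleton p))
  rw [Finset.sum_product_right, Finset.sum_singleton] at h1
  have h2 : ((fun ω => (Z ω, Y ω)) ⁻¹' ↑((Finset.univ : Finset S) ×ˢ {y}))
      = Y ⁻¹' {y} := by
    ext ω; simp [eq_comm]
  rw [h2] at h1
  rw [← h1, ENNReal.toReal_sum (fun _ _ => measure_ne_top μ _)]

/-- Monotonicity of Shannon entropy under (deterministic) maps. -/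
lemma shannonEntropy_comp_le {S S' : Type*} [Fintype S] [Fintype S']
    [MeasurableSpace S] [MeasurableSingletonClass S]
    {V : Ω → S} (hV : Measurable V) (f : S → S') :
    shannonEntropy (fun ω => f (V ω)) μ ≤ shannonEntropy V μ := by
  classical
  have hdecomp : ∀ s' : S', (μ ((fun ω => f (V ω)) ⁻¹' {s'})).toReal
      = ∑ s ∈ Finset.univ.filter (fun s => f s = s'), (μ (V ⁻¹' {s})).toReal := by
    intro s'
    have hset : (fun ω => f (V ω)) ⁻¹' {s'}
        = V ⁻¹' ↑(Finset.univ.filter (fun s => f s = s')) := by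
      ext ω; simp
    rw [hset, ← sum_measure_preimage_singleton _
        (fun x _ => hV (measurableSet_singleton x)),
      ENNReal.toReal_sum (fun _ _ => measure_ne_top μ _)]
  rw [shannonEntropy, shannonEntropy]
  calc ∑ s' : S', Real.negMulLog (μ ((fun ω => f (V ω)) ⁻¹' {s'})).toReal
      ≤ ∑ s' : S', ∑ s ∈ Finset.univ.filter (fun s => f s = s'),
          Real.negMulLog (μ (V ⁻¹' {s})).toReal := by
        refine Finset.sum_le_sum fun s' _ => ?_
        rw [hdecomp]
        exact negMulLog_sum_le _ _ (fun _ _ => ENNReal.toReal_nonneg)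
    _ = ∑ s : S, Real.negMulLog (μ (V ⁻¹' {s})).toReal :=
        Finset.sum_fiberwise_of_maps_to (fun _ _ => Finset.mem_univ _) _

/-- Subadditivity of Shannon entropy. -/
lemma shannonEntropy_pair_le {S T : Type*} [Fintype S] [Fintype T]
    [MeasurableSpace S] [MeasurableSingletonClass S]
    [MeasurableSpace T] [MeasurableSingletonClass T]
    {Z : Ω → S} {Y : Ω → T} (hZ : Measurable Z) (hY : Measurable Y) :
    shannonEntropy (fun ω => (Z ω, Y ω)) μ ≤ shannonEntropy Z μ + shannonEntropy Y μ := by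
  classical
  set p : S × T → ℝ := fun zy => (μ ((fun ω => (Z ω, Y ω)) ⁻¹' {zy})).toReal with hpdef
  set a : S → ℝ := fun z => (μ (Z ⁻¹' {z})).toReal with hadef
  set b : T → ℝ := fun y => (μ (Y ⁻¹' {y})).toReal with hbdef
  have hple_a : ∀ z y, p (z, y) ≤ a z := by
    intro z y
    refine ENNReal.toReal_mono (measure_ne_top μ _) (measure_mono ?_)
    intro ω hω
    simp only [Set.mem_preimage, Set.mem_singleton_iff, Prod.mk.injEq] at hω ⊢
    exact hω.1
  have hple_b : ∀ z y, p (z, y) ≤ b y := by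
    intro z y
    refine ENNReal.toReal_mono (measure_ne_top μ _) (measure_mono ?_)
    intro ω hω
    simp only [Set.mem_preimage, Set.mem_singleton_iff, Prod.mk.injEq] at hω ⊢
    exact hω.2
  have hp0 : ∀ zy, 0 ≤ p zy := fun _ => ENNReal.toReal_nonneg
  have ha0 : ∀ z, 0 ≤ a z := fun _ => ENNReal.toReal_nonneg
  have hb0 : ∀ y, 0 ≤ b y := fun _ => ENNReal.toReal_nonneg
  have hsum_p : ∑ zy : S × T, p zy = 1 := sum_toReal_preimage_eq_one μ (hZ.prodMk hY)
  have hsum_a : ∑ z : S, a z = 1 := sum_toReal_preimage_eq_one μ hZ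
  have hsum_b : ∑ y : T, b y = 1 := sum_toReal_preimage_eq_one μ hY
  have hmarg_a : ∀ z, a z = ∑ y : T, p (z, y) := fun z => marginal_fst μ hZ hY z
  have hmarg_b : ∀ y, b y = ∑ z : S, p (z, y) := fun y => marginal_snd μ hZ hY y
  have hgibbs : ∑ zy : S × T, Real.negMulLog (p zy)
      ≤ ∑ zy : S × T, -(p zy * Real.log (a zy.1 * b zy.2)) := by
    refine gibbs_sum _ _ _ (fun zy _ => hp0 zy)
      (fun zy _ => mul_nonneg (ha0 _) (hb0 _)) ?_ ?_
    · intro zy _ hq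
      rcases mul_eq_zero.mp hq with h | h
      · exact le_antisymm (h ▸ hple_a zy.1 zy.2) (hp0 zy)
      · exact le_antisymm (h ▸ hple_b zy.1 zy.2) (hp0 zy)
    · rw [hsum_p, Fintype.sum_prod_type]
      simp_rw [← Finset.mul_sum, hsum_b, mul_one, hsum_a]
      exact le_refl 1
  have hsplit : ∑ zy : S × T, -(p zy * Real.log (a zy.1 * b zy.2))
      = ∑ zy : S × T, -(p zy * Real.log (a zy.1))
        + ∑ zy : S × T, -(p zy * Real.log (b zy.2)) := by
    rw [← Finset.sum_add_distrib]
    refine Finset.sum_congr rfl fun zy _ => ?_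
    rcases (hp0 zy).lt_or_eq with h | h
    · have haz : 0 < a zy.1 := lt_of_lt_of_le h (hple_a zy.1 zy.2)
      have hby : 0 < b zy.2 := lt_of_lt_of_le h (hple_b zy.1 zy.2)
      rw [Real.log_mul haz.ne' hby.ne']
      ring
    · simp [← h]
  have hfst : ∑ zy : S × T, -(p zy * Real.log (a zy.1)) = shannonEntropy Z μ := by
    rw [Fintype.sum_prod_type, shannonEntropy]
    refine Finset.sum_congr rfl fun z _ => ?_
    have : Real.negMulLog (a z) = -((∑ y : T, p (z, y)) * Real.log (a z)) := by
      rw [Real.negMulLog_eq_neg, ← hmarg_a z]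
    rw [this, Finset.sum_neg_distrib, Finset.sum_mul]
  have hsnd : ∑ zy : S × T, -(p zy * Real.log (b zy.2)) = shannonEntropy Y μ := by
    rw [Fintype.sum_prod_type_right, shannonEntropy]
    refine Finset.sum_congr rfl fun y _ => ?_
    have : Real.negMulLog (b y) = -((∑ z : S, p (z, y)) * Real.log (b y)) := by
      rw [Real.negMulLog_eq_neg, ← hmarg_b y]
    rw [this, Finset.sum_neg_distrib, Finset.sum_mul]
  calc shannonEntropy (fun ω => (Z ω, Y ω)) μ
      = ∑ zy : S × T, Real.negMulLog (p zy) := rfl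
    _ ≤ ∑ zy : S × T, -(p zy * Real.log (a zy.1 * b zy.2)) := hgibbs
    _ = shannonEntropy Z μ + shannonEntropy Y μ := by rw [hsplit, hfst, hsnd]

/-- Entropy of a pair of independent random variables. -/
lemma shannonEntropy_pair_of_indep {S T : Type*} [Fintype S] [Fintype T]
    [MeasurableSpace S] [MeasurableSingletonClass S]
    [MeasurableSpace T] [MeasurableSingletonClass T]
    {X : Ω → S} {Y : Ω → T} (hX : Measurable X) (hY : Measurable Y)
    (hindep : IndepFun X Y μ) :
    shannonEntropy (fun ω => (X ω, Y ω)) μ = shannonEntropy X μ + shannonEntropy Y μ := by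
  classical
  have key : ∀ x y, (μ ((fun ω => (X ω, Y ω)) ⁻¹' {(x, y)})).toReal
      = (μ (X ⁻¹' {x})).toReal * (μ (Y ⁻¹' {y})).toReal := by
    intro x y
    have hset : (fun ω => (X ω, Y ω)) ⁻¹' {(x, y)} = X ⁻¹' {x} ∩ Y ⁻¹' {y} := by
      ext ω; simp [Prod.ext_iff]
    rw [hset, (indepFun_iff_measure_inter_preimage_eq_mul.mp hindep) {x} {y}
      (measurableSet_singleton x) (measurableSet_singleton y), ENNReal.toReal_mul]
  rw [shannonEntropy, Fintype.sum_prod_type]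
  simp_rw [key, Real.negMulLog_mul]
  rw [shannonEntropy, shannonEntropy]
  simp_rw [Finset.sum_add_distrib, ← Finset.sum_mul, ← Finset.mul_sum,
    sum_toReal_preimage_eq_one μ hY]
  rw [← Finset.sum_mul, sum_toReal_preimage_eq_one μ hX, one_mul, one_mul]

/-- Entropy is at most the log of the cardinality. -/
lemma shannonEntropy_le_log_card {S : Type*} [Fintype S]
    [MeasurableSpace S] [MeasurableSingletonClass S]
    {V : Ω → S} (hV : Measurable V) :
    shannonEntropy V μ ≤ Real.log (Fintype.card S) := by
  classical
  have hsum : ∑ x : S, (μ (V ⁻¹' {x})).toReal = 1 := sum_toReal_preimage_eq_one μ hV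
  have hcard : 0 < Fintype.card S := by
    rcases Nat.eq_zero_or_pos (Fintype.card S) with h | h
    · have : IsEmpty S := Fintype.card_eq_zero_iff.mp h
      rw [Finset.univ_eq_empty, Finset.sum_empty] at hsum
      norm_num at hsum
    · exact h
  have hgibbs : ∑ x : S, Real.negMulLog (μ (V ⁻¹' {x})).toReal
      ≤ ∑ x : S, -((μ (V ⁻¹' {x})).toReal * Real.log ((Fintype.card S : ℝ)⁻¹)) := by
    refine gibbs_sum _ _ _ (fun _ _ => ENNReal.toReal_nonneg)
      (fun _ _ => by positivity) (fun x _ h => ?_) ?_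
    · exact absurd h (by positivity)
    · rw [hsum, Finset.sum_const, Finset.card_univ, nsmul_eq_mul,
        mul_inv_cancel₀ (by positivity : (Fintype.card S : ℝ) ≠ 0)]
  calc shannonEntropy V μ
      ≤ ∑ x : S, -((μ (V ⁻¹' {x})).toReal * Real.log ((Fintype.card S : ℝ)⁻¹)) := hgibbs
    _ = Real.log (Fintype.card S) := by
        rw [Real.log_inv]
        simp_rw [mul_neg, neg_neg, ← Finset.sum_mul, hsum, one_mul]

end Aux

/-- Lower bound on the communication overhead: if `X` is uniformly distributed over the
`c`-element subsets of `Fin N`, `X` is independent of `Y`, `X` is determined by `(Z, Y)`,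
and `Z` takes values in a type of cardinality at most `q ^ χ`, then
`χ ≥ log_q (N choose c)`. -/
theorem comm_overhead_lower_bound
    {Ω T U : Type*} [MeasurableSpace Ω]
    [Fintype T] [MeasurableSpace T] [MeasurableSingletonClass T]
    [Fintype U] [MeasurableSpace U] [MeasurableSingletonClass U]
    (μ : Measure Ω) [IsProbabilityMeasure μ]
    (N c q χ : ℕ) (hc1 : 1 ≤ c) (hcN : c ≤ N) (hq : 2 ≤ q)
    [MeasurableSpace {S : Finset (Fin N) // S.card = c}]
    [MeasurableSingletonClass {S : Finset (Fin N) // S.card = c}]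
    (X : Ω → {S : Finset (Fin N) // S.card = c}) (Y : Ω → T) (Z : Ω → U)
    (hX : Measurable X) (hY : Measurable Y) (hZ : Measurable Z)
    (hunif : ∀ x : {S : Finset (Fin N) // S.card = c},
      μ (X ⁻¹' {x}) = (Fintype.card {S : Finset (Fin N) // S.card = c} : ENNReal)⁻¹)
    (hcard : Fintype.card U ≤ q ^ χ)
    (hindep : IndepFun X Y μ)
    (h0 : condShannonEntropy X (fun ω => (Z ω, Y ω)) μ = 0) :
    (χ : ℝ) ≥ Real.logb q (Nat.choose N c) := by
  have hn : Fintype.card {S : Finset (Fin N) // S.card = c} = Nat.choose N c := by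
    rw [Fintype.card_finset_len, Fintype.card_fin]
  have hnpos : 0 < Nat.choose N c := Nat.choose_pos hcN
  -- entropy of uniform X
  have hHX : shannonEntropy X μ = Real.log (Nat.choose N c) := by
    rw [shannonEntropy]
    have hval : ∀ x : {S : Finset (Fin N) // S.card = c},
        (μ (X ⁻¹' {x})).toReal = ((Nat.choose N c : ℝ))⁻¹ := by
      intro x
      rw [hunif x, hn, ← ENNReal.ofReal_natCast,
        ← ENNReal.ofReal_inv_of_pos (by exact_mod_cast hnpos)]
      rw [ENNReal.toReal_ofReal (by positivity)]
    simp_rw [hval]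
    rw [Finset.sum_const, Finset.card_univ, hn, nsmul_eq_mul]
    rw [Real.negMulLog, Real.log_inv]
    have : (Nat.choose N c : ℝ) ≠ 0 := by exact_mod_cast hnpos.ne'
    field_simp
  -- chain of inequalities
  have h1 : shannonEntropy (fun ω => (X ω, Y ω)) μ
      = shannonEntropy X μ + shannonEntropy Y μ :=
    shannonEntropy_pair_of_indep μ hX hY hindep
  have h2 : shannonEntropy (fun ω => (X ω, Y ω)) μ
      ≤ shannonEntropy (fun ω => (X ω, (Z ω, Y ω))) μ :=
    shannonEntropy_comp_le μ (hX.prodMk (hZ.prodMk hY)) (fun p => (p.1, p.2.2))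
  have h3 : shannonEntropy (fun ω => (X ω, (Z ω, Y ω))) μ
      = shannonEntropy (fun ω => (Z ω, Y ω)) μ := by
    have := h0
    rw [condShannonEntropy] at this
    linarith
  have h4 : shannonEntropy (fun ω => (Z ω, Y ω)) μ
      ≤ shannonEntropy Z μ + shannonEntropy Y μ :=
    shannonEntropy_pair_le μ hZ hY
  have h5 : shannonEntropy Z μ ≤ Real.log (Fintype.card U) :=
    shannonEntropy_le_log_card μ hZ
  have hUpos : 0 < Fintype.card U := by
    rcases Nat.eq_zero_or_pos (Fintype.card U) with h | h
    · have : IsEmpty U := Fintype.card_eq_zero_iff.mp h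
      have h1 := sum_toReal_preimage_eq_one μ hZ
      rw [Finset.univ_eq_empty, Finset.sum_empty] at h1
      norm_num at h1
    · exact h
  have h6 : Real.log (Fintype.card U) ≤ χ * Real.log q := by
    have h7 : Real.log (Fintype.card U) ≤ Real.log ((q : ℝ) ^ χ) := by
      apply Real.log_le_log (by exact_mod_cast hUpos)
      exact_mod_cast hcard
    rwa [Real.log_pow] at h7
  have hmain : Real.log (Nat.choose N c) ≤ χ * Real.log q := by
    have := h2.trans_eq h3 |>.trans h4
    rw [h1] at this
    linarith [hHX ▸ this, h5, h6]
  have hlogq : 0 < Real.log q :=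
    Real.log_pos (by exact_mod_cast lt_of_lt_of_le one_lt_two (by exact_mod_cast hq))
  rw [ge_iff_le, Real.logb, div_le_iff₀ hlogq]
  exact hmain
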